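/- The Langevin function L(x) = coth(x) - 1/x (L(0)=0) is strictly concave on (0, ∞). -/

import Mathlib

open Real Set

noncomputable def langevin (x : ℝ) : ℝ :=
  if x = 0 then 0 else Real.cosh x / Real.sinh x - 1 / x

private lemma HasDerivAt.congr_d {f : ℝ → ℝ} {d d' x : ℝ} (h : HasDerivAt f d x)
    (hdd : d = d') : HasDerivAt f d' x := hdd ▸ h

/-- Helper: if `f 0 = 0` and `f` has nonnegative derivative on `(0,∞)`, then `f x ≥ 0`
for `x ≥ 0`. -/
private lemma aux_nonneg {f f' : ℝ → ℝ} (hf0 : f 0 = 0)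
    (hd : ∀ x, HasDerivAt f (f' x) x) (h' : ∀ x, 0 < x → 0 ≤ f' x) :
    ∀ x, 0 ≤ x → 0 ≤ f x := by
  have hmono : MonotoneOn f (Ici 0) := by
    apply monotoneOn_of_deriv_nonneg (convex_Ici 0)
    · exact fun x _ => (hd x).continuousAt.continuousWithinAt
    · exact fun x _ => ((hd x).differentiableAt).differentiableWithinAt
    · intro x hx
      rw [interior_Ici, mem_Ioi] at hx
      rw [(hd x).deriv]
      exact h' x hx
  intro x hx
  have := hmono (self_mem_Ici (a := (0:ℝ))) hx hx
  rwa [hf0] at this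

private lemma cosh_lower (x : ℝ) (hx : 0 ≤ x) : 1 + x ^ 2 / 2 ≤ Real.cosh x := by
  have h := aux_nonneg (f := fun x => Real.cosh x - 1 - x ^ 2 / 2)
    (f' := fun x => Real.sinh x - x) (by norm_num)
    (fun y => (((Real.hasDerivAt_cosh y).sub_const 1).sub
        ((hasDerivAt_pow 2 y).div_const 2)).congr_d (by ring))
    (fun y hy => by
      have : y ≤ Real.sinh y := Real.self_le_sinh_iff.2 hy.le
      linarith) x hx
  linarith

private lemma sinh_le_mul_cosh (x : ℝ) (hx : 0 ≤ x) : Real.sinh x ≤ x * Real.cosh x := by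
  have h := aux_nonneg (f := fun x => x * Real.cosh x - Real.sinh x)
    (f' := fun x => x * Real.sinh x) (by norm_num)
    (fun y => (((hasDerivAt_id y).mul (Real.hasDerivAt_cosh y)).sub
        (Real.hasDerivAt_sinh y)).congr_d (by simp only [id_eq, one_mul]; ring))
    (fun y hy => mul_nonneg hy.le ((by simpa using Real.sinh_strictMono.monotone hy.le : (0:ℝ) ≤ Real.sinh y))) x hx
  linarith

private lemma sinh_lower (x : ℝ) (hx : 0 ≤ x) : x + x ^ 3 / 6 ≤ Real.sinh x := by
  have h := aux_nonneg (f := fun x => Real.sinh x - x - x ^ 3 / 6)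
    (f' := fun x => Real.cosh x - 1 - x ^ 2 / 2) (by norm_num)
    (fun y => (((Real.hasDerivAt_sinh y).sub (hasDerivAt_id y)).sub
        ((hasDerivAt_pow 3 y).div_const 6)).congr_d (by ring))
    (fun y hy => by linarith [cosh_lower y hy.le]) x hx
  linarith

private lemma mul_cosh_lower (x : ℝ) (hx : 0 ≤ x) :
    (x - x ^ 3 / 3) * Real.cosh x ≤ Real.sinh x := by
  have h := aux_nonneg (f := fun x => Real.sinh x - (x - x ^ 3 / 3) * Real.cosh x)
    (f' := fun x => x ^ 2 * Real.cosh x - (x - x ^ 3 / 3) * Real.sinh x) (by norm_num)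
    (fun y => ((Real.hasDerivAt_sinh y).sub
        (((hasDerivAt_id y).sub ((hasDerivAt_pow 3 y).div_const 3)).mul
          (Real.hasDerivAt_cosh y))).congr_d (by simp only [Pi.sub_apply, id_eq]; ring))
    (fun y hy => by
      have h1 := sinh_le_mul_cosh y hy.le
      have h2 := (by simpa using Real.sinh_strictMono.monotone hy.le : (0:ℝ) ≤ Real.sinh y)
      have h3 := (Real.cosh_pos y).le
      nlinarith [sq_nonneg y, mul_nonneg (mul_nonneg (pow_nonneg hy.le 3) hy.le) h2]) x hx
  linarith

/-- Key inequality: `x^3 * cosh x < sinh x ^ 3` for `x > 0`. -/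
private lemma key_ineq (x : ℝ) (hx : 0 < x) : x ^ 3 * Real.cosh x < Real.sinh x ^ 3 := by
  -- Consider q(x) = sinh x ^ 3 / cosh x - x ^ 3, strictly monotone on [0, ∞).
  set q : ℝ → ℝ := fun x => Real.sinh x ^ 3 / Real.cosh x - x ^ 3 with hq
  have hmono : StrictMonoOn q (Ici 0) := by
    apply strictMonoOn_of_deriv_pos (convex_Ici 0)
    · exact ((Real.continuous_sinh.pow 3).div Real.continuous_cosh
        (fun y => (Real.cosh_pos y).ne')).sub (continuous_pow 3) |>.continuousOn
    · intro y hy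
      rw [interior_Ici, mem_Ioi] at hy
      have hc := Real.cosh_pos y
      have hd : HasDerivAt q
          ((3 * Real.sinh y ^ 2 * Real.cosh y * Real.cosh y - Real.sinh y ^ 3 * Real.sinh y) /
            Real.cosh y ^ 2 - 3 * y ^ 2) y := by
        exact ((((Real.hasDerivAt_sinh y).pow 3).div (Real.hasDerivAt_cosh y) hc.ne').sub
          (hasDerivAt_pow 3 y)).congr_d (by simp only [Pi.pow_apply]; ring)
      rw [hd.deriv]
      rw [sub_pos, lt_div_iff₀ (by positivity)]
      -- need : 3 y^2 cosh^2 < 3 sinh^2 cosh^2 - sinh^4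
      have hs := sinh_lower y hy.le
      have hsc := mul_cosh_lower y hy.le
      have hs0 : 0 < Real.sinh y := Real.sinh_pos_iff.2 hy
      have hcsq : Real.cosh y ^ 2 = 1 + Real.sinh y ^ 2 := by
        rw [Real.cosh_sq]; rw [Real.sinh_sq]; ring
      have hy6 : 0 < y := hy
      have hsq : (y + y ^ 3 / 6) ^ 2 ≤ Real.sinh y ^ 2 :=
        pow_le_pow_left₀ (by positivity) hs 2
      rcases le_or_gt (y ^ 2) (3 / 2) with hcase | hcase
      · -- here y - y^3/3 ≥ y/2 > 0
        have hpos : 0 < y - y ^ 3 / 3 := by nlinarith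
        have h2 : (y - y ^ 3 / 3) ^ 2 * Real.cosh y ^ 2 ≤ Real.sinh y ^ 2 := by
          nlinarith [mul_pos hpos hc]
        nlinarith [sq_nonneg (Real.sinh y), mul_pos hc hc,
          mul_le_mul_of_nonneg_right (show 2 * (y + y ^ 3 / 6) ^ 2 ≤ 2 * Real.sinh y ^ 2 by
            linarith) (le_of_lt (mul_pos hc hc)),
          mul_pos (mul_pos hy6 hy6) (mul_pos (mul_pos hy6 hy6) (mul_pos hy6 hy6))]
      · -- here 2 sinh^2 > 3 y^2 already
        have h2 : 3 * y ^ 2 < 2 * Real.sinh y ^ 2 := by nlinarith [hsq, sq_nonneg y, mul_lt_mul_of_pos_left hcase (show (0:ℝ) < y ^ 2 by positivity)]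
        nlinarith [mul_pos hc hc, sq_nonneg (Real.sinh y), mul_pos hs0 hs0,
          mul_lt_mul_of_pos_right h2 (mul_pos hc hc)]
  have h0 : q 0 = 0 := by simp [hq]
  have hqx : 0 < q x := by
    have := hmono (self_mem_Ici (a := (0:ℝ))) (mem_Ici.2 hx.le) hx
    rwa [h0] at this
  have hc := Real.cosh_pos x
  rw [hq] at hqx
  simp only [sub_pos, lt_div_iff₀ hc] at hqx
  linarith

private lemma deriv_langevin_eq (x : ℝ) (hx : 0 < x) :
    deriv langevin x = 1 / x ^ 2 - 1 / Real.sinh x ^ 2 := by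
  have hs : Real.sinh x ≠ 0 := (Real.sinh_pos_iff.2 hx).ne'
  have heq : langevin =ᶠ[nhds x] fun y => Real.cosh y / Real.sinh y - 1 / y := by
    filter_upwards [isOpen_Ioi.mem_nhds (mem_Ioi.2 hx)] with y hy
    simp [langevin, (ne_of_gt (mem_Ioi.1 hy))]
  rw [heq.deriv_eq]
  have hd : HasDerivAt (fun y => Real.cosh y / Real.sinh y - 1 / y)
      (1 / x ^ 2 - 1 / Real.sinh x ^ 2) x := by
    have h1 : HasDerivAt (fun y => Real.cosh y / Real.sinh y)
        ((Real.sinh x * Real.sinh x - Real.cosh x * Real.cosh x) / Real.sinh x ^ 2) x :=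
      (Real.hasDerivAt_cosh x).div (Real.hasDerivAt_sinh x) hs
    have h2 : HasDerivAt (fun y : ℝ => 1 / y) ((0 * x - 1 * 1) / x ^ 2) x :=
      (hasDerivAt_const x 1).div (hasDerivAt_id x) hx.ne'
    refine (h1.sub h2).congr_d ?_
    have hc2 : Real.sinh x * Real.sinh x - Real.cosh x * Real.cosh x = -1 := by
      have := Real.cosh_sq_sub_sinh_sq x
      nlinarith [this]
    rw [hc2]
    field_simp
    ring
  exact hd.deriv

theorem langevin_strictConcaveOn :
    StrictConcaveOn ℝ (Set.Ioi 0) langevin := by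
  apply strictConcaveOn_of_deriv2_neg (convex_Ioi 0)
  · -- continuity
    apply ContinuousOn.congr (f := fun y : ℝ => Real.cosh y / Real.sinh y - 1 / y)
    · exact (Real.continuous_cosh.continuousOn.div Real.continuous_sinh.continuousOn
        (fun y hy => (Real.sinh_pos_iff.2 (mem_Ioi.1 hy)).ne')).sub
        (continuousOn_const.div continuousOn_id (fun y hy => (ne_of_gt (mem_Ioi.1 hy))))
    · intro y hy
      simp [langevin, (ne_of_gt (mem_Ioi.1 hy))]
  · intro x hx
    rw [interior_Ioi, mem_Ioi] at hx
    have hs : 0 < Real.sinh x := Real.sinh_pos_iff.2 hx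
    show deriv (deriv langevin) x < 0
    have heq : deriv langevin =ᶠ[nhds x] fun y => 1 / y ^ 2 - 1 / Real.sinh y ^ 2 := by
      filter_upwards [isOpen_Ioi.mem_nhds (mem_Ioi.2 hx)] with y hy
      exact deriv_langevin_eq y (mem_Ioi.1 hy)
    rw [heq.deriv_eq]
    have hd : HasDerivAt (fun y => 1 / y ^ 2 - 1 / Real.sinh y ^ 2)
        (2 * Real.cosh x / Real.sinh x ^ 3 - 2 / x ^ 3) x := by
      have h1 : HasDerivAt (fun y : ℝ => 1 / y ^ 2)
          ((0 * x ^ 2 - 1 * (↑2 * x ^ 1)) / (x ^ 2) ^ 2) x :=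
        (hasDerivAt_const x 1).div (hasDerivAt_pow 2 x) (by positivity)
      have h2 : HasDerivAt (fun y : ℝ => 1 / Real.sinh y ^ 2)
          ((0 * Real.sinh x ^ 2 - 1 * (↑2 * Real.sinh x ^ 1 * Real.cosh x)) /
            (Real.sinh x ^ 2) ^ 2) x :=
        (hasDerivAt_const x 1).div ((Real.hasDerivAt_sinh x).pow 2) (by positivity)
      refine (h1.sub h2).congr_d ?_
      field_simp
      ring
    rw [hd.deriv]
    have hkey := key_ineq x hx
    rw [sub_neg, div_lt_div_iff₀ (by positivity) (by positivity)]
    nlinarith [Real.cosh_pos x]
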